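/- Let n ≥ 2 and let D ⊆ {2,…,n}. The chromatic number of the distance graph G(S_n, D) equals the product ∏_{d ∈ D} d. -/

import Mathlib

/-- The Rosenbloom–Tsfasman weight of a permutation `σ` of `{1,…,n}`:
the largest (1-based) index `i` with `σ(i) ≠ i`, and `0` for the identity. -/
def permRTWeight {n : ℕ} (σ : Equiv.Perm (Fin n)) : ℕ :=
  (Finset.univ.filter fun i => σ i ≠ i).sup fun i => i.val + 1

/-- The Rosenbloom–Tsfasman distance on `S_n`: `ρ(α,β) = ω(α⁻¹β)`. -/
def permRTDist {n : ℕ} (α β : Equiv.Perm (Fin n)) : ℕ := permRTWeight (α⁻¹ * β)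

/-- The distance graph `G(S_n, D)`: distinct `α, β` are adjacent iff `ρ(α,β) ∈ D`. -/
def permRTGraph (n : ℕ) (D : Finset ℕ) : SimpleGraph (Equiv.Perm (Fin n)) :=
  SimpleGraph.fromRel fun α β => permRTDist α β ∈ D

section Aux

open Finset Equiv

variable {n : ℕ}

lemma permRTDist_eq (α β : Equiv.Perm (Fin n)) :
    permRTDist α β = (Finset.univ.filter fun i => α i ≠ β i).sup fun i => i.val + 1 := by
  unfold permRTDist permRTWeight
  congr 1
  apply Finset.filter_congr
  intro i _
  simp only [Equiv.Perm.mul_apply, ne_eq]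
  constructor
  · intro h h'
    exact h (by rw [← h']; simp)
  · intro h h'
    apply h
    have : α (α⁻¹ (β i)) = α i := by rw [h']
    rw [← Equiv.Perm.mul_apply, mul_inv_cancel, Equiv.Perm.one_apply] at this
    exact this.symm

lemma permRTDist_symm (α β : Equiv.Perm (Fin n)) : permRTDist α β = permRTDist β α := by
  rw [permRTDist_eq, permRTDist_eq]
  congr 1
  apply Finset.filter_congr
  intro i _
  simp [ne_comm]

lemma permRTDist_fix (α β : Equiv.Perm (Fin n)) (i : Fin n) (hi : permRTDist α β ≤ i.val) :
    α i = β i := by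
  by_contra h
  have : i.val + 1 ≤ permRTDist α β := by
    rw [permRTDist_eq]
    exact Finset.le_sup (f := fun i : Fin n => i.val + 1)
      (Finset.mem_filter.mpr ⟨Finset.mem_univ _, h⟩)
  omega

lemma permRTDist_move (α β : Equiv.Perm (Fin n)) (d : ℕ) (h1 : 1 ≤ d)
    (h : permRTDist α β = d) (hd : d - 1 < n) :
    α ⟨d - 1, hd⟩ ≠ β ⟨d - 1, hd⟩ := by
  rw [permRTDist_eq] at h
  set s := Finset.univ.filter fun i : Fin n => α i ≠ β i with hs
  have hne : s.Nonempty := by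
    rw [Finset.nonempty_iff_ne_empty]
    intro he
    rw [he] at h
    simp at h
    omega
  obtain ⟨i, hi, hie⟩ := Finset.exists_mem_eq_sup s hne (fun i : Fin n => i.val + 1)
  have hvi : i.val + 1 = d := by rw [← h, hie]
  have hieq : i = ⟨d - 1, hd⟩ := by
    apply Fin.ext
    simp only [Fin.val_mk]
    omega
  rw [← hieq]
  exact (Finset.mem_filter.mp hi).2

lemma permRTWeight_le_iff {σ : Equiv.Perm (Fin n)} {m : ℕ} :
    permRTWeight σ ≤ m ↔ ∀ i : Fin n, σ i ≠ i → i.val + 1 ≤ m := by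
  unfold permRTWeight
  rw [Finset.sup_le_iff]
  simp

lemma permRTWeight_eq (σ : Equiv.Perm (Fin n)) (d : ℕ) (h1 : 1 ≤ d) (hd : d - 1 < n)
    (hfix : ∀ i : Fin n, d ≤ i.val → σ i = i) (hmove : σ ⟨d - 1, hd⟩ ≠ ⟨d - 1, hd⟩) :
    permRTWeight σ = d := by
  apply le_antisymm
  · rw [permRTWeight_le_iff]
    intro i hi
    by_contra hc
    exact hi (hfix i (by omega))
  · have hmem : (⟨d - 1, hd⟩ : Fin n) ∈ Finset.univ.filter fun i : Fin n => σ i ≠ i :=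
      Finset.mem_filter.mpr ⟨Finset.mem_univ _, hmove⟩
    have := Finset.le_sup (f := fun i : Fin n => i.val + 1) hmem
    unfold permRTWeight
    simp only [Fin.val_mk] at this ⊢
    omega

/-- The count used for coloring: rank of `σ ⟨d-1⟩` among images of indices `< d`. -/
def rtCount (n d : ℕ) (hd : d - 1 < n) (σ : Equiv.Perm (Fin n)) : ℕ :=
  (Finset.univ.filter fun j : Fin n => j.val < d ∧ σ j < σ ⟨d - 1, hd⟩).card

lemma rtCount_eq (n d : ℕ) (hd : d - 1 < n) (σ : Equiv.Perm (Fin n)) :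
    rtCount n d hd σ =
      (((Finset.univ.filter fun j : Fin n => j.val < d).image σ).filter
        fun x => x < σ ⟨d - 1, hd⟩).card := by
  unfold rtCount
  rw [Finset.filter_image, Finset.card_image_of_injective _ σ.injective,
    Finset.filter_filter]

lemma rtCount_lt (n d : ℕ) (h2 : 1 ≤ d) (hdn : d ≤ n) (hd : d - 1 < n) (σ : Equiv.Perm (Fin n)) :
    rtCount n d hd σ < d := by
  have i0lt : (⟨d - 1, hd⟩ : Fin n) = ⟨d - 1, hd⟩ := rfl
  set A : Finset (Fin n) := Finset.univ.filter fun j : Fin n => j.val < d with hA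
  have hAcard : A.card = d := by
    have : A = (Finset.univ : Finset (Fin d)).map (Fin.castLEEmb hdn) := by
      ext x
      constructor
      · intro hx
        have hx' : x.val < d := (Finset.mem_filter.mp hx).2
        exact Finset.mem_map.mpr ⟨⟨x.val, hx'⟩, Finset.mem_univ _, Fin.ext rfl⟩
      · intro hx
        obtain ⟨y, -, rfl⟩ := Finset.mem_map.mp hx
        exact Finset.mem_filter.mpr ⟨Finset.mem_univ _, y.isLt⟩

    rw [this, Finset.card_map, Finset.card_univ, Fintype.card_fin]
  have hsub : (Finset.univ.filter fun j : Fin n => j.val < d ∧ σ j < σ ⟨d - 1, hd⟩) ⊆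
      A.erase ⟨d - 1, hd⟩ := by
    intro j hj
    obtain ⟨-, hj1, hj2⟩ := Finset.mem_filter.mp hj
    refine Finset.mem_erase.mpr ⟨?_, Finset.mem_filter.mpr ⟨Finset.mem_univ _, hj1⟩⟩
    intro hji
    rw [hji] at hj2
    exact lt_irrefl _ hj2
  have hmem : (⟨d - 1, hd⟩ : Fin n) ∈ A :=
    Finset.mem_filter.mpr ⟨Finset.mem_univ _, by simp only [Fin.val_mk]; omega⟩
  have := Finset.card_le_card hsub
  rw [Finset.card_erase_of_mem hmem, hAcard] at this
  unfold rtCount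
  omega

lemma card_filter_lt_lt {S : Finset (Fin n)} {a b : Fin n} (ha : a ∈ S) (hab : a < b) :
    (S.filter fun x => x < a).card < (S.filter fun x => x < b).card := by
  apply Finset.card_lt_card
  rw [Finset.ssubset_iff_of_subset]
  · exact ⟨a, Finset.mem_filter.mpr ⟨ha, hab⟩, fun hc => lt_irrefl _ (Finset.mem_filter.mp hc).2⟩
  · intro x hx
    obtain ⟨hx1, hx2⟩ := Finset.mem_filter.mp hx
    exact Finset.mem_filter.mpr ⟨hx1, lt_trans hx2 hab⟩

lemma rtCount_ne (n d : ℕ) (h2 : 2 ≤ d) (hdn : d ≤ n) (α β : Equiv.Perm (Fin n))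
    (hagree : ∀ i : Fin n, d ≤ i.val → α i = β i)
    (hmove : α ⟨d - 1, by omega⟩ ≠ β ⟨d - 1, by omega⟩) :
    rtCount n d (by omega) α ≠ rtCount n d (by omega) β := by
  have hd : d - 1 < n := by omega
  set i0 : Fin n := ⟨d - 1, hd⟩ with hi0
  set A : Finset (Fin n) := Finset.univ.filter fun j : Fin n => j.val < d with hA
  have key : ∀ γ δ : Equiv.Perm (Fin n), (∀ i : Fin n, d ≤ i.val → γ i = δ i) →
      A.image γ ⊆ A.image δ := by
    intro γ δ hgd x hx
    obtain ⟨j, hj, rfl⟩ := Finset.mem_image.mp hx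
    have hjA : j.val < d := (Finset.mem_filter.mp hj).2
    have hlt : (δ.symm (γ j)).val < d := by
      by_contra hge
      push_neg at hge
      have h1 : γ (δ.symm (γ j)) = δ (δ.symm (γ j)) := hgd _ hge
      rw [Equiv.apply_symm_apply] at h1
      have h2 := γ.injective h1
      rw [h2] at hge
      omega
    exact Finset.mem_image.mpr ⟨δ.symm (γ j),
      Finset.mem_filter.mpr ⟨Finset.mem_univ _, hlt⟩, Equiv.apply_symm_apply _ _⟩
  have himg : A.image α = A.image β :=
    Finset.Subset.antisymm (key α β hagree) (key β α fun i hi => (hagree i hi).symm)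
  have hi0A : i0 ∈ A := Finset.mem_filter.mpr ⟨Finset.mem_univ _, by simp [hi0]; omega⟩
  have haS : α i0 ∈ A.image α := Finset.mem_image_of_mem _ hi0A
  have hbS : β i0 ∈ A.image α := by
    rw [himg]; exact Finset.mem_image_of_mem _ hi0A
  rw [Ne, rtCount_eq, rtCount_eq]
  rw [show ((Finset.univ.filter fun j : Fin n => j.val < d).image β) = A.image α from himg.symm]
  rw [show ((Finset.univ.filter fun j : Fin n => j.val < d).image α) = A.image α from rfl]
  rcases lt_or_gt_of_ne hmove with h | h
  · exact Nat.ne_of_lt (card_filter_lt_lt haS h)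
  · exact Nat.ne_of_gt (card_filter_lt_lt hbS h)

/-- Existence of a clique of size `∏ d ∈ D, d`, containing the identity. -/
lemma rt_clique (n : ℕ) (D : Finset ℕ) :
    D ⊆ Finset.Icc 2 n →
    ∃ K : Finset (Equiv.Perm (Fin n)), (1 : Equiv.Perm (Fin n)) ∈ K ∧
      K.card = ∏ d ∈ D, d ∧
      ∀ α ∈ K, ∀ β ∈ K, α ≠ β → permRTDist α β ∈ D := by
  induction D using Finset.strongInduction with
  | _ D ih =>
    intro hD
    rcases Finset.eq_empty_or_nonempty D with rfl | hne
    · exact ⟨{1}, Finset.mem_singleton_self _, by simp, by simp⟩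
    · set d := D.max' hne with hdd
      have hdmem : d ∈ D := D.max'_mem hne
      obtain ⟨hd2, hdn⟩ := Finset.mem_Icc.mp (hD hdmem)
      set D' := D.erase d with hD'
      have hss : D' ⊂ D := Finset.erase_ssubset hdmem
      obtain ⟨K', h1K', hcard', hpair'⟩ :=
        ih D' hss (Finset.Subset.trans (Finset.erase_subset _ _) hD)
      have hd1n : d - 1 < n := by omega
      set i0 : Fin n := ⟨d - 1, hd1n⟩ with hi0
      -- every element of K' fixes all indices with value ≥ d - 1
      have hfix' : ∀ σ ∈ K', ∀ i : Fin n, d - 1 ≤ i.val → σ i = i := by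
        intro σ hσ i hi
        by_cases h1 : σ = 1
        · simp [h1]
        · have hw : permRTDist 1 σ ∈ D' := hpair' 1 h1K' σ hσ (Ne.symm h1)
          have hwσ : permRTDist 1 σ = permRTWeight σ := by
            unfold permRTDist; rw [inv_one, one_mul]
          rw [hwσ] at hw
          have hwd : permRTWeight σ ≤ d := D.le_max' _ (Finset.mem_of_mem_erase hw)
          have hwne : permRTWeight σ ≠ d := (Finset.mem_erase.mp hw).1
          by_contra hc
          have := permRTWeight_le_iff.mp (le_refl (permRTWeight σ)) i hc
          omega
      set jm : Fin d → Fin n := fun m => ⟨m.val, lt_of_lt_of_le m.isLt hdn⟩ with hjm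
      set f : Fin d × Equiv.Perm (Fin n) → Equiv.Perm (Fin n) :=
        fun p => Equiv.swap i0 (jm p.1) * p.2 with hf
      -- evaluation at i0
      have heval : ∀ (a : Fin d), ∀ σ ∈ K', f (a, σ) i0 = jm a := by
        intro a σ hσ
        simp only [hf, Equiv.Perm.mul_apply]
        rw [hfix' σ hσ i0 (le_refl _), Equiv.swap_apply_left]
      set K : Finset (Equiv.Perm (Fin n)) :=
        (Finset.univ ×ˢ K').image f with hK
      have hinj : Set.InjOn f (Finset.univ ×ˢ K' : Finset (Fin d × Equiv.Perm (Fin n))) := by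
        intro p hp q hq hpq
        obtain ⟨-, hp2⟩ := Finset.mem_product.mp hp
        obtain ⟨-, hq2⟩ := Finset.mem_product.mp hq
        have h1 : f (p.1, p.2) i0 = f (q.1, q.2) i0 := by rw [hpq]
        rw [heval p.1 p.2 hp2, heval q.1 q.2 hq2] at h1
        have h12 : p.1 = q.1 := by
          have h1v := congrArg Fin.val h1
          simp only [hjm] at h1v
          exact Fin.ext h1v
        have h22 : p.2 = q.2 := by
          have := hpq
          simp only [hf, h12] at this
          exact mul_left_cancel this
        exact Prod.ext h12 h22
      refine ⟨K, ?_, ?_, ?_⟩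
      · -- 1 ∈ K
        have hmd : (⟨d - 1, by omega⟩ : Fin d) ∈ (Finset.univ : Finset (Fin d)) :=
          Finset.mem_univ _
        refine Finset.mem_image.mpr ⟨(⟨d - 1, by omega⟩, 1),
          Finset.mem_product.mpr ⟨hmd, h1K'⟩, ?_⟩
        simp only [hf]
        rw [mul_one, show jm ⟨d - 1, by omega⟩ = i0 from Fin.ext rfl, Equiv.swap_self]
        rfl
      · -- cardinality
        rw [hK, Finset.card_image_of_injOn hinj, Finset.card_product, Finset.card_univ,
          Fintype.card_fin, hcard', hD']
        exact Finset.mul_prod_erase D (fun x => x) hdmem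
      · -- pairwise distances
        intro α hα β hβ hab
        obtain ⟨p, hp, rfl⟩ := Finset.mem_image.mp hα
        obtain ⟨q, hq, rfl⟩ := Finset.mem_image.mp hβ
        obtain ⟨a, σ⟩ := p
        obtain ⟨b, τ⟩ := q
        obtain ⟨-, hσ⟩ := Finset.mem_product.mp hp
        obtain ⟨-, hτ⟩ := Finset.mem_product.mp hq
        by_cases hcase : a = b
        · subst hcase
          have hστ : σ ≠ τ := by
            intro h; exact hab (by rw [h])
          have heq : (f (a, σ))⁻¹ * f (a, τ) = σ⁻¹ * τ := by
            simp only [hf, mul_inv_rev]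
            rw [mul_assoc, ← mul_assoc (Equiv.swap i0 (jm a))⁻¹, inv_mul_cancel, one_mul]
          have : permRTDist (f (a, σ)) (f (a, τ)) = permRTDist σ τ := by
            unfold permRTDist; rw [heq]
          rw [this]
          exact Finset.mem_of_mem_erase (hpair' σ hσ τ hτ hστ)
        · -- distance is exactly d
          have hgoal : permRTDist (f (a, σ)) (f (b, τ)) = d := by
            unfold permRTDist
            apply permRTWeight_eq _ d (by omega) hd1n
            · intro i hi
              have hii0 : i ≠ i0 := by
                intro h; rw [h] at hi; simp [hi0] at hi; omega
              have hijb : i ≠ jm b := by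
                intro h
                have : i.val = (jm b).val := congrArg Fin.val h
                simp [hjm] at this
                omega
              have hija : i ≠ jm a := by
                intro h
                have : i.val = (jm a).val := congrArg Fin.val h
                simp [hjm] at this
                omega
              have hβi : f (b, τ) i = i := by
                simp only [hf, Equiv.Perm.mul_apply]
                rw [hfix' τ hτ i (by omega), Equiv.swap_apply_of_ne_of_ne hii0 hijb]
              have hαi : f (a, σ) i = i := by
                simp only [hf, Equiv.Perm.mul_apply]
                rw [hfix' σ hσ i (by omega), Equiv.swap_apply_of_ne_of_ne hii0 hija]
              simp only [Equiv.Perm.mul_apply]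
              rw [hβi, Equiv.Perm.inv_eq_iff_eq]
              exact hαi.symm
            · have hβi0 : f (b, τ) i0 = jm b := heval b τ hτ
              have hαi0 : f (a, σ) i0 = jm a := heval a σ hσ
              simp only [Equiv.Perm.mul_apply]
              rw [show (⟨d - 1, hd1n⟩ : Fin n) = i0 from rfl, hβi0]
              intro hc
              have : jm b = f (a, σ) i0 := by
                rw [← hc, ← Equiv.Perm.mul_apply, mul_inv_cancel, Equiv.Perm.one_apply]
              rw [hαi0] at this
              have hval := congrArg Fin.val this
              simp only [hjm] at hval
              exact hcase (Fin.ext hval.symm)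
          rw [hgoal]
          exact hdmem

end Aux

/-- The chromatic number of `G(S_n, D)` is `∏_{d ∈ D} d`. -/
theorem permRTGraph_chromaticNumber (n : ℕ) (hn : 2 ≤ n)
    (D : Finset ℕ) (hD : D ⊆ Finset.Icc 2 n) :
    (permRTGraph n D).chromaticNumber = (∏ d ∈ D, d : ℕ) := by
  apply le_antisymm
  · -- upper bound: coloring
    have hcol : (permRTGraph n D).Colorable (∏ d ∈ D, d) := by
      have C : (permRTGraph n D).Coloring (∀ d : D, Fin (d : ℕ)) := by
        refine SimpleGraph.Coloring.mk
          (fun σ d =>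
            have h := Finset.mem_Icc.mp (hD d.2)
            ⟨rtCount n d (by omega) σ % (d : ℕ), Nat.mod_lt _ (by omega)⟩) ?_
        intro α β hadj hEq
        rw [permRTGraph, SimpleGraph.fromRel_adj] at hadj
        obtain ⟨hne, hor⟩ := hadj
        have hdist : permRTDist α β ∈ D := by
          rcases hor with h | h
          · exact h
          · rwa [permRTDist_symm]
        obtain ⟨h2, hdn⟩ := Finset.mem_Icc.mp (hD hdist)
        set d := permRTDist α β with hd
        have hfix : ∀ i : Fin n, d ≤ i.val → α i = β i :=
          fun i hi => permRTDist_fix α β i (by omega)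
        have hmove : α ⟨d - 1, by omega⟩ ≠ β ⟨d - 1, by omega⟩ :=
          permRTDist_move α β d (by omega) rfl (by omega)
        have hcne := rtCount_ne n d h2 hdn α β hfix hmove
        have hcomp := congrFun hEq ⟨d, hdist⟩
        simp only [Fin.mk.injEq] at hcomp
        have hltα := rtCount_lt n d (by omega) hdn (by omega) α
        have hltβ := rtCount_lt n d (by omega) hdn (by omega) β
        rw [Nat.mod_eq_of_lt hltα, Nat.mod_eq_of_lt hltβ] at hcomp
        exact hcne hcomp
      have := C.colorable
      have hcard : Fintype.card (∀ d : D, Fin (d : ℕ)) = ∏ d ∈ D, d := by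
        rw [Fintype.card_pi]
        simp only [Fintype.card_fin]
        exact Finset.prod_coe_sort D (fun d => d)
      rwa [hcard] at this
    exact hcol.chromaticNumber_le
  · -- lower bound: clique
    obtain ⟨K, h1K, hcard, hpair⟩ := rt_clique n D hD
    have hclique : (permRTGraph n D).IsClique (K : Set (Equiv.Perm (Fin n))) := by
      intro α hα β hβ hne
      rw [permRTGraph, SimpleGraph.fromRel_adj]
      exact ⟨hne, Or.inl (hpair α hα β hβ hne)⟩
    have := hclique.card_le_chromaticNumber
    rwa [hcard] at this
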